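/- Let 0 ≤ k ≤ n be integers and let v = (v¹, …, vⁿ) : [0, π] → ℝⁿ be a C² map such that v^{k+1}(0) = ⋯ = vⁿ(0) = 0 and v^{k+1}(π) = ⋯ = vⁿ(π) = 0, while (v¹)'(0) = ⋯ = (vᵏ)'(0) = 0 and (v¹)'(π) = ⋯ = (vᵏ)'(π) = 0. Then ∫_0^π |v'(θ)|² dθ ≤ ∫_0^π |v''(θ)|² dθ. (Second-order Wirtinger inequality under mixed Dirichlet–Neumann boundary conditions; the Euclidean version of inequality (E) in the proof of Lemma 8.1.) -/

import Mathlib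

open MeasureTheory Set intervalIntegral Complex
noncomputable section
namespace Stmt8

abbrev T : ℝ := 2 * Real.pi
abbrev ma : ℝ := -Real.pi

lemma hT0 : 0 < T := by positivity
lemma hab : ma < ma + T := by unfold ma T; nlinarith [Real.pi_pos]

/-- Interval Parseval: for a bounded measurable function on `(ma, ma+T]`. -/
lemma hasSum_parseval {G : ℝ → ℂ} (hGm : Measurable G) {C : ℝ}
    (hGb : ∀ x ∈ Ioc ma (ma + T), ‖G x‖ ≤ C) :
    HasSum (fun n : ℤ => ‖fourierCoeffOn hab G n‖ ^ 2)
      (T⁻¹ * ∫ x in ma..(ma + T), ‖G x‖ ^ 2) := by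
  haveI : Fact (0 < T) := ⟨hT0⟩
  set u : AddCircle T → ℂ := AddCircle.liftIoc T ma G with hu
  have hum : Measurable u := by
    exact ((hGm.comp measurable_subtype_coe).comp
      (AddCircle.measurableEquivIoc T ma).measurable)
  have hub : ∀ z, ‖u z‖ ≤ C := by
    intro z
    have h1 : u z = G ((AddCircle.equivIoc T ma) z : ℝ) := rfl
    rw [h1]
    exact hGb _ ((AddCircle.equivIoc T ma) z).2
  have humem : MemLp u 2 (@AddCircle.haarAddCircle T ⟨hT0⟩) :=
    MemLp.of_bound hum.aestronglyMeasurable C (Filter.Eventually.of_forall hub)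
  have hcoe : fourierCoeffOn hab G = fourierCoeff (humem.toLp u) := by
    funext n
    have h1 : fourierCoeff ((humem.toLp u : Lp ℂ 2 _) : AddCircle T → ℂ) n
        = fourierCoeff u n := by
      unfold fourierCoeff
      refine integral_congr_ae ((humem.coeFn_toLp).mono fun x hx => ?_)
      dsimp only
      rw [hx]
    rw [h1, hu, fourierCoeff_liftIoc_eq]
  have hsummable : Summable fun n : ℤ => ‖fourierCoeff (humem.toLp u) n‖ ^ 2 := by
    have h2 := lp.memℓp (fourierBasis.repr (humem.toLp u))
    have h3 := h2.summable (p := 2) (by norm_num)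
    simp only [fourierBasis_repr] at h3
    convert h3 using 2 with n
    rw [ENNReal.toReal_ofNat, Real.rpow_two]
  have htsum := tsum_sq_fourierCoeff (humem.toLp u)
  have hval : (∫ t : AddCircle T, ‖(humem.toLp u : Lp ℂ 2 _) t‖ ^ 2 ∂AddCircle.haarAddCircle)
      = T⁻¹ * ∫ x in ma..(ma + T), ‖G x‖ ^ 2 := by
    have h4 : (∫ t : AddCircle T, ‖(humem.toLp u : Lp ℂ 2 _) t‖ ^ 2 ∂AddCircle.haarAddCircle)
        = ∫ t : AddCircle T, ‖u t‖ ^ 2 ∂AddCircle.haarAddCircle := by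
      refine integral_congr_ae ((humem.coeFn_toLp).mono fun x hx => ?_)
      dsimp only
      rw [hx]
    have h5 : (∫ t : AddCircle T, ‖u t‖ ^ 2)
        = ∫ x in ma..(ma + T), ‖u (x : AddCircle T)‖ ^ 2 :=
      (AddCircle.intervalIntegral_preimage T ma _).symm
    have h6 : (∫ x in ma..(ma + T), ‖u (x : AddCircle T)‖ ^ 2)
        = ∫ x in ma..(ma + T), ‖G x‖ ^ 2 := by
      rw [intervalIntegral.integral_of_le hab.le, intervalIntegral.integral_of_le hab.le]
      refine setIntegral_congr_fun measurableSet_Ioc fun x hx => ?_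
      rw [hu, AddCircle.liftIoc_coe_apply hx]
    have h7 : (∫ t : AddCircle T, ‖u t‖ ^ 2 ∂AddCircle.haarAddCircle)
        = T⁻¹ * ∫ t : AddCircle T, ‖u t‖ ^ 2 := by
      rw [AddCircle.volume_eq_smul_haarAddCircle, MeasureTheory.integral_smul_measure,
        ENNReal.toReal_ofReal hT0.le, smul_eq_mul, ← mul_assoc,
        inv_mul_cancel₀ hT0.ne', one_mul]
    rw [h4, h7, h5, h6]
  rw [hcoe, ← hval, ← htsum]
  exact hsummable.hasSum

lemma HasDerivWithinAt.ofReal_comp' {f : ℝ → ℝ} {u x : ℝ} {s : Set ℝ}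
    (hf : HasDerivWithinAt f u s x) :
    HasDerivWithinAt (fun y => ((f y : ℂ))) (u : ℂ) s x := by
  have h := Complex.ofRealCLM.hasFDerivAt.comp_hasDerivWithinAt x hf
  simp at h
  exact h

lemma intervalIntegrable_of_bdd {E : Type*} [NormedAddCommGroup E] {h : ℝ → E}
    (hm : AEStronglyMeasurable h volume) {C : ℝ} (hb : ∀ x, ‖h x‖ ≤ C) (a b : ℝ) :
    IntervalIntegrable h volume a b := by
  rw [intervalIntegrable_iff]
  exact Measure.integrableOn_of_bounded measure_Ioc_lt_top.ne hm
    (Filter.Eventually.of_forall hb)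

lemma wirtinger_circle {F G : ℝ → ℝ} {C : ℝ}
    (hFc : Continuous F)
    (hper : F ma = F (ma + T))
    (hmean : (∫ x in ma..(ma + T), F x) = 0)
    (hderiv : ∀ x ∈ Ioo ma (ma + T), HasDerivWithinAt F (G x) (Ioi x) x)
    (hGm : Measurable G)
    (hGb : ∀ x, |G x| ≤ C) :
    (∫ x in ma..(ma + T), (F x) ^ 2) ≤ ∫ x in ma..(ma + T), (G x) ^ 2 := by
  haveI : Fact (0 < T) := ⟨hT0⟩
  set Fc : ℝ → ℂ := fun x => ((F x : ℂ)) with hFcdef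
  set Gc : ℝ → ℂ := fun x => ((G x : ℂ)) with hGcdef
  obtain ⟨CF, hCF⟩ := (isCompact_Icc (a := ma) (b := ma + T)).exists_bound_of_continuousOn
    hFc.continuousOn
  have hFb : ∀ x ∈ Ioc ma (ma + T), ‖Fc x‖ ≤ CF := fun x hx => by
    rw [hFcdef]; simpa [Complex.norm_real] using hCF x (Ioc_subset_Icc_self hx)
  have hGb' : ∀ x ∈ Ioc ma (ma + T), ‖Gc x‖ ≤ C := fun x _ => by
    rw [hGcdef]; simpa [Complex.norm_real] using hGb x
  have hFm : Measurable Fc := Complex.measurable_ofReal.comp hFc.measurable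
  have hGcm : Measurable Gc := Complex.measurable_ofReal.comp hGm
  have hA := hasSum_parseval hFm hFb
  have hB := hasSum_parseval hGcm hGb'
  have hGint : IntervalIntegrable Gc volume ma (ma + T) :=
    intervalIntegrable_of_bdd hGcm.aestronglyMeasurable (C := C)
      (fun x => by rw [hGcdef]; simpa [Complex.norm_real] using hGb x) _ _
  have key : ∀ n : ℤ, n ≠ 0 → ‖fourierCoeffOn hab Fc n‖ ≤ ‖fourierCoeffOn hab Gc n‖ := by
    intro n hn
    have hcont : ContinuousOn Fc (Set.uIcc ma (ma + T)) :=
      (Complex.continuous_ofReal.comp hFc).continuousOn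
    have hderiv' : ∀ x ∈ Ioo (min ma (ma + T)) (max ma (ma + T)),
        HasDerivWithinAt Fc (Gc x) (Ioi x) x := by
      rw [min_eq_left hab.le, max_eq_right hab.le]
      intro x hx
      exact HasDerivWithinAt.ofReal_comp' (hderiv x hx)
    have rel := fourierCoeffOn_of_hasDeriv_right hab hn hcont hderiv' hGint
    have h0 : Fc (ma + T) - Fc ma = 0 := by
      simp only [hFcdef, ← Complex.ofReal_sub, hper, sub_self, Complex.ofReal_zero]
    rw [h0, mul_zero, zero_sub] at rel
    rw [rel]
    have h2 : ((ma + T : ℝ) : ℂ) - ((ma : ℝ) : ℂ) = ((T : ℝ) : ℂ) := by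
      push_cast; ring
    rw [h2, norm_mul, norm_neg, norm_mul]
    have h1 : ‖(1 : ℂ) / (-2 * ↑Real.pi * Complex.I * (n : ℂ))‖
        = (2 * Real.pi * |(n : ℝ)|)⁻¹ := by
      simp [norm_div, Complex.norm_real, abs_of_pos Real.pi_pos, mul_comm, mul_assoc,
        mul_left_comm]
    have h3 : ‖((T : ℝ) : ℂ)‖ = 2 * Real.pi := by
      rw [Complex.norm_real, Real.norm_eq_abs, _root_.abs_of_nonneg hT0.le]
    rw [h1, h3]
    have hn1 : (1 : ℝ) ≤ |(n : ℝ)| := by exact_mod_cast Int.one_le_abs hn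
    have hnne : |(n : ℝ)| ≠ 0 := by positivity
    have heq : (2 * Real.pi * |(n : ℝ)|)⁻¹ * (2 * Real.pi * ‖fourierCoeffOn hab Gc n‖)
        = ‖fourierCoeffOn hab Gc n‖ / |(n : ℝ)| := by
      field_simp
    rw [heq]
    exact div_le_self (norm_nonneg _) hn1
  have hzero : fourierCoeffOn hab Fc 0 = 0 := by
    rw [fourierCoeffOn_eq_integral]
    simp only [neg_zero, fourier_zero, one_smul, hFcdef]
    rw [intervalIntegral.integral_ofReal, hmean]
    simp
  have hterm : ∀ n : ℤ,
      ‖fourierCoeffOn hab Fc n‖ ^ 2 ≤ ‖fourierCoeffOn hab Gc n‖ ^ 2 := by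
    intro n
    by_cases hn : n = 0
    · subst hn
      rw [hzero]
      simpa using sq_nonneg ‖fourierCoeffOn hab Gc 0‖
    · exact pow_le_pow_left₀ (norm_nonneg _) (key n hn) 2
  have hle := hasSum_le hterm hA hB
  have e1 : (∫ x in ma..(ma + T), ‖Fc x‖ ^ 2) = ∫ x in ma..(ma + T), (F x) ^ 2 := by
    apply intervalIntegral.integral_congr
    intro x _
    simp [hFcdef, Complex.norm_real, _root_.sq_abs]
  have e2 : (∫ x in ma..(ma + T), ‖Gc x‖ ^ 2) = ∫ x in ma..(ma + T), (G x) ^ 2 := by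
    apply intervalIntegral.integral_congr
    intro x _
    simp [hGcdef, Complex.norm_real, _root_.sq_abs]
  rw [e1, e2] at hle
  exact (mul_le_mul_iff_right₀ (inv_pos.2 hT0)).1 hle


lemma hmaT : ma + T = Real.pi := by unfold ma T; ring

def clamp (x : ℝ) : ℝ := max 0 (min x Real.pi)

lemma clamp_mem (x : ℝ) : clamp x ∈ Icc 0 Real.pi :=
  ⟨le_max_left _ _, max_le Real.pi_pos.le (min_le_right _ _)⟩

lemma clamp_eq {x : ℝ} (hx : x ∈ Icc 0 Real.pi) : clamp x = x := by
  unfold clamp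
  rw [min_eq_left hx.2, max_eq_right hx.1]

lemma continuous_clamp : Continuous clamp :=
  continuous_const.max (continuous_id.min continuous_const)

lemma Icc_mem_nhdsWithin_Ioi : Icc 0 Real.pi ∈ nhdsWithin (0:ℝ) (Ioi (0:ℝ)) := by
  refine Filter.mem_of_superset ?_ Ioo_subset_Icc_self
  rw [show Ioo (0:ℝ) Real.pi = Ioi 0 ∩ Iio Real.pi from rfl]
  exact Filter.inter_mem self_mem_nhdsWithin
    (nhdsWithin_le_nhds (Iio_mem_nhds Real.pi_pos))

lemma wirtinger_dirichlet {f g : ℝ → ℝ}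
    (hg : ContinuousOn g (Icc 0 Real.pi))
    (hd : ∀ x ∈ Icc 0 Real.pi, HasDerivWithinAt f (g x) (Icc 0 Real.pi) x)
    (h0 : f 0 = 0) (hpi : f Real.pi = 0) :
    (∫ x in (0:ℝ)..Real.pi, (f x) ^ 2) ≤ ∫ x in (0:ℝ)..Real.pi, (g x) ^ 2 := by
  have hma : ma = -Real.pi := rfl
  have hf : ContinuousOn f (Icc 0 Real.pi) := fun x hx => (hd x hx).continuousWithinAt
  set fc : ℝ → ℝ := fun x => f (clamp x) with hfcdef
  set gc : ℝ → ℝ := fun x => g (clamp x) with hgcdef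
  have hfc : Continuous fc := hf.comp_continuous continuous_clamp clamp_mem
  have hgc : Continuous gc := hg.comp_continuous continuous_clamp clamp_mem
  have hfc0 : fc 0 = 0 := by rw [hfcdef]; simp only; rw [clamp_eq ⟨le_refl _, Real.pi_pos.le⟩, h0]
  have hfcpi : fc Real.pi = 0 := by
    rw [hfcdef]; simp only; rw [clamp_eq ⟨Real.pi_pos.le, le_refl _⟩, hpi]
  set F : ℝ → ℝ := fun x => if 0 ≤ x then fc x else -fc (-x) with hFdef
  set G : ℝ → ℝ := fun x => gc |x| with hGdef
  have hFcont : Continuous F := by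
    rw [hFdef]
    exact Continuous.if_le hfc (hfc.comp continuous_neg).neg continuous_const continuous_id
      (fun x hx => by rw [← hx, neg_zero, hfc0, neg_zero])
  have hGcont : Continuous G := hgc.comp continuous_abs
  obtain ⟨C, hC⟩ := isCompact_Icc.exists_bound_of_continuousOn hg
  have hGb : ∀ x, |G x| ≤ C := fun x => by
    rw [hGdef]
    simpa using hC _ (clamp_mem |x|)
  -- equalities of F, G on half-intervals
  have hFpos : ∀ x ∈ uIcc (0:ℝ) Real.pi, F x = fc x := fun x hx => by
    rw [uIcc_of_le Real.pi_pos.le] at hx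
    rw [hFdef]; simp only [if_pos hx.1]
  have hFneg : ∀ x ∈ uIcc ma (0:ℝ), F x = -fc (-x) := fun x hx => by
    rw [uIcc_of_le (by linarith [hma, Real.pi_pos, Real.pi_pos] : ma ≤ 0)] at hx
    rw [hFdef]
    rcases lt_or_eq_of_le hx.2 with h | h
    · simp only [if_neg (not_le.2 h)]
    · subst h; simp [hfc0]
  have hfceq : ∀ x ∈ uIcc (0:ℝ) Real.pi, fc x = f x := fun x hx => by
    rw [uIcc_of_le Real.pi_pos.le] at hx
    rw [hfcdef]; simp only; rw [clamp_eq hx]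
  have hgceq : ∀ x ∈ uIcc (0:ℝ) Real.pi, gc x = g x := fun x hx => by
    rw [uIcc_of_le Real.pi_pos.le] at hx
    rw [hgcdef]; simp only; rw [clamp_eq hx]
  -- apply the circle inequality
  have main := wirtinger_circle (F := F) (G := G) (C := C) hFcont ?hper ?hmean ?hderiv
      (hgc.measurable.comp measurable_abs) hGb
  case hper =>
    rw [hmaT]
    have h1 : F ma = -fc Real.pi := by
      rw [hFdef]
      have : ¬ (0 ≤ ma) := by simp only [ma]; linarith [hma, Real.pi_pos, Real.pi_pos]
      simp only [if_neg this, ma, neg_neg]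
    have h2 : F Real.pi = fc Real.pi := by
      rw [hFdef]; simp only [if_pos Real.pi_pos.le]
    rw [show F ma = -fc Real.pi from h1, h2, hfcpi, neg_zero]
  case hmean =>
    rw [hmaT]
    have hsplit := intervalIntegral.integral_add_adjacent_intervals (μ := volume)
      (hFcont.intervalIntegrable ma 0) (hFcont.intervalIntegrable 0 Real.pi)
    rw [← hsplit]
    have hI1 : (∫ x in ma..(0:ℝ), F x) = -(∫ x in (0:ℝ)..Real.pi, fc x) := by
      rw [intervalIntegral.integral_congr hFneg, intervalIntegral.integral_neg,
        intervalIntegral.integral_comp_neg (a := ma) (b := (0:ℝ)) fc]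
      norm_num [ma]
    have hI2 : (∫ x in (0:ℝ)..Real.pi, F x) = ∫ x in (0:ℝ)..Real.pi, fc x :=
      intervalIntegral.integral_congr hFpos
    rw [hI1, hI2, neg_add_cancel]
  case hderiv =>
    rw [hmaT]
    intro x hx
    rcases lt_trichotomy x 0 with hneg | hzero | hpos
    · have hmem : -x ∈ Icc 0 Real.pi := ⟨by linarith [hma, Real.pi_pos], by linarith [hma, Real.pi_pos, hx.1]⟩
      have hD : HasDerivAt f (g (-x)) (-x) :=
        (hd (-x) hmem).hasDerivAt (Icc_mem_nhds (by linarith [hma, Real.pi_pos]) (by linarith [hma, Real.pi_pos, hx.1]))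
      have h1 : HasDerivAt (fun y : ℝ => f (-y)) (g (-x) * (-1)) x :=
        hD.comp x (hasDerivAt_neg x)
      have h2 : HasDerivAt (fun y : ℝ => -f (-y)) (g (-x)) x := by
        have h := h1.neg
        simp only [mul_neg, mul_one, neg_neg] at h
        exact h
      have hFeq : F =ᶠ[nhds x] fun y => -f (-y) := by
        filter_upwards [Ioo_mem_nhds hx.1 hneg] with y hy
        rw [hFdef]
        simp only [if_neg (not_le.2 hy.2)]
        rw [hfcdef]; simp only
        rw [clamp_eq ⟨by linarith [hma, Real.pi_pos, hy.2], by linarith [hma, Real.pi_pos, hy.1]⟩]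
      have h3 : HasDerivAt F (g (-x)) x := h2.congr_of_eventuallyEq hFeq
      have hGx : G x = g (-x) := by
        rw [hGdef]; simp only
        rw [_root_.abs_of_neg hneg, hgcdef]; simp only
        rw [clamp_eq hmem]
      rw [hGx]
      exact h3.hasDerivWithinAt
    · subst hzero
      have hFeqOn : EqOn F f (Icc 0 Real.pi) := fun y hy => by
        rw [hFdef]; simp only [if_pos hy.1]
        rw [hfcdef]; simp only; rw [clamp_eq hy]
      have hF0 : HasDerivWithinAt F (g 0) (Icc 0 Real.pi) 0 :=
        (hd 0 ⟨le_refl _, Real.pi_pos.le⟩).congr hFeqOn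
          (hFeqOn ⟨le_refl _, Real.pi_pos.le⟩)
      have hG0 : G 0 = g 0 := by
        rw [hGdef]; simp only [abs_zero]
        rw [hgcdef]; simp only; rw [clamp_eq ⟨le_refl _, Real.pi_pos.le⟩]
      rw [hG0]
      exact hF0.mono_of_mem_nhdsWithin Icc_mem_nhdsWithin_Ioi
    · have hmem : x ∈ Icc 0 Real.pi := ⟨hpos.le, hx.2.le⟩
      have hD : HasDerivAt f (g x) x :=
        (hd x hmem).hasDerivAt (Icc_mem_nhds hpos hx.2)
      have hFeq : F =ᶠ[nhds x] f := by
        filter_upwards [Ioo_mem_nhds hpos hx.2] with y hy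
        rw [hFdef]
        simp only [if_pos hy.1.le]
        rw [hfcdef]; simp only; rw [clamp_eq ⟨hy.1.le, hy.2.le⟩]
      have h3 : HasDerivAt F (g x) x := hD.congr_of_eventuallyEq hFeq
      have hGx : G x = g x := by
        rw [hGdef]; simp only
        rw [_root_.abs_of_pos hpos, hgcdef]; simp only
        rw [clamp_eq hmem]
      rw [hGx]
      exact h3.hasDerivWithinAt
  -- transfer the conclusion back to [0, π]
  rw [hmaT] at main
  have hFsq := intervalIntegral.integral_add_adjacent_intervals (μ := volume)
    ((hFcont.pow 2).intervalIntegrable ma 0) ((hFcont.pow 2).intervalIntegrable 0 Real.pi)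
  have hGsq := intervalIntegral.integral_add_adjacent_intervals (μ := volume)
    ((hGcont.pow 2).intervalIntegrable ma 0) ((hGcont.pow 2).intervalIntegrable 0 Real.pi)
  have hF1 : (∫ x in ma..(0:ℝ), (F x) ^ 2) = ∫ x in (0:ℝ)..Real.pi, (fc x) ^ 2 := by
    have : (∫ x in ma..(0:ℝ), (F x) ^ 2) = ∫ x in ma..(0:ℝ), (fun y => (fc y) ^ 2) (-x) := by
      refine intervalIntegral.integral_congr fun x hx => ?_
      rw [hFneg x hx]; ring
    rw [this, intervalIntegral.integral_comp_neg (a := ma) (b := (0:ℝ)) (fun y => fc y ^ 2)]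
    norm_num [ma]
  have hF2 : (∫ x in (0:ℝ)..Real.pi, (F x) ^ 2) = ∫ x in (0:ℝ)..Real.pi, (fc x) ^ 2 :=
    intervalIntegral.integral_congr fun x hx => by rw [hFpos x hx]
  have hG1 : (∫ x in ma..(0:ℝ), (G x) ^ 2) = ∫ x in (0:ℝ)..Real.pi, (gc x) ^ 2 := by
    have : (∫ x in ma..(0:ℝ), (G x) ^ 2) = ∫ x in ma..(0:ℝ), (fun y => (gc y) ^ 2) (-x) := by
      refine intervalIntegral.integral_congr fun x hx => ?_
      rw [uIcc_of_le (by linarith [hma, Real.pi_pos, Real.pi_pos] : ma ≤ 0)] at hx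
      rw [hGdef]; simp only
      rw [_root_.abs_of_nonpos hx.2]
    rw [this, intervalIntegral.integral_comp_neg (a := ma) (b := (0:ℝ)) (fun y => gc y ^ 2)]
    norm_num [ma]
  have hG2 : (∫ x in (0:ℝ)..Real.pi, (G x) ^ 2) = ∫ x in (0:ℝ)..Real.pi, (gc x) ^ 2 := by
    refine intervalIntegral.integral_congr fun x hx => ?_
    rw [uIcc_of_le Real.pi_pos.le] at hx
    rw [hGdef]; simp only
    rw [_root_.abs_of_nonneg hx.1]
  simp only [Pi.pow_apply] at hFsq hGsq
  rw [← hFsq, ← hGsq, hF1, hF2, hG1, hG2] at main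
  have hfin1 : (∫ x in (0:ℝ)..Real.pi, (fc x) ^ 2) = ∫ x in (0:ℝ)..Real.pi, (f x) ^ 2 :=
    intervalIntegral.integral_congr fun x hx => by rw [hfceq x hx]
  have hfin2 : (∫ x in (0:ℝ)..Real.pi, (gc x) ^ 2) = ∫ x in (0:ℝ)..Real.pi, (g x) ^ 2 :=
    intervalIntegral.integral_congr fun x hx => by rw [hgceq x hx]
  rw [hfin1, hfin2] at main
  linarith


lemma wirtinger_neumann {f g : ℝ → ℝ}
    (hg : ContinuousOn g (Icc 0 Real.pi))
    (hd : ∀ x ∈ Icc 0 Real.pi, HasDerivWithinAt f (g x) (Icc 0 Real.pi) x)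
    (hmean : (∫ x in (0:ℝ)..Real.pi, f x) = 0) :
    (∫ x in (0:ℝ)..Real.pi, (f x) ^ 2) ≤ ∫ x in (0:ℝ)..Real.pi, (g x) ^ 2 := by
  have hma : ma = -Real.pi := rfl
  have hf : ContinuousOn f (Icc 0 Real.pi) := fun x hx => (hd x hx).continuousWithinAt
  set fc : ℝ → ℝ := fun x => f (clamp x) with hfcdef
  set gc : ℝ → ℝ := fun x => g (clamp x) with hgcdef
  have hfc : Continuous fc := hf.comp_continuous continuous_clamp clamp_mem
  have hgc : Continuous gc := hg.comp_continuous continuous_clamp clamp_mem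
  set F : ℝ → ℝ := fun x => fc |x| with hFdef
  set G : ℝ → ℝ := fun x => if 0 ≤ x then gc x else -gc (-x) with hGdef
  have hFcont : Continuous F := hfc.comp continuous_abs
  have hGmeas : Measurable G :=
    Measurable.ite (measurableSet_Ici : MeasurableSet (Ici (0:ℝ))) hgc.measurable
      ((hgc.comp continuous_neg).neg).measurable
  obtain ⟨C, hC⟩ := isCompact_Icc.exists_bound_of_continuousOn hg
  have hGb : ∀ x, |G x| ≤ C := by
    intro x
    rw [hGdef]
    simp only
    split_ifs
    · simpa using hC _ (clamp_mem x)
    · rw [abs_neg]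
      simpa using hC _ (clamp_mem (-x))
  have hFpos : ∀ x ∈ uIcc (0:ℝ) Real.pi, F x = fc x := fun x hx => by
    rw [uIcc_of_le Real.pi_pos.le] at hx
    rw [hFdef]; simp only; rw [_root_.abs_of_nonneg hx.1]
  have hFneg : ∀ x ∈ uIcc ma (0:ℝ), F x = fc (-x) := fun x hx => by
    rw [uIcc_of_le (by rw [hma]; linarith [Real.pi_pos] : ma ≤ 0)] at hx
    rw [hFdef]; simp only; rw [_root_.abs_of_nonpos hx.2]
  have hGpos : ∀ x ∈ uIcc (0:ℝ) Real.pi, G x = gc x := fun x hx => by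
    rw [uIcc_of_le Real.pi_pos.le] at hx
    rw [hGdef]; simp only [if_pos hx.1]
  have hGsqneg : ∀ x ∈ uIcc ma (0:ℝ), (G x) ^ 2 = (fun y => (gc y) ^ 2) (-x) := fun x hx => by
    rw [uIcc_of_le (by rw [hma]; linarith [Real.pi_pos] : ma ≤ 0)] at hx
    rw [hGdef]
    simp only
    rcases lt_or_eq_of_le hx.2 with h | h
    · rw [if_neg (not_le.2 h)]; ring
    · subst h; norm_num
  have hfceq : ∀ x ∈ uIcc (0:ℝ) Real.pi, fc x = f x := fun x hx => by
    rw [uIcc_of_le Real.pi_pos.le] at hx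
    rw [hfcdef]; simp only; rw [clamp_eq hx]
  have hgceq : ∀ x ∈ uIcc (0:ℝ) Real.pi, gc x = g x := fun x hx => by
    rw [uIcc_of_le Real.pi_pos.le] at hx
    rw [hgcdef]; simp only; rw [clamp_eq hx]
  have main := wirtinger_circle (F := F) (G := G) (C := C) hFcont ?hper ?hmean ?hderiv hGmeas hGb
  case hper =>
    rw [hmaT]
    rw [hFdef]; simp only
    rw [hma, abs_neg, _root_.abs_of_nonneg Real.pi_pos.le]
  case hmean =>
    rw [hmaT]
    have hsplit := intervalIntegral.integral_add_adjacent_intervals (μ := volume)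
      (hFcont.intervalIntegrable ma 0) (hFcont.intervalIntegrable 0 Real.pi)
    rw [← hsplit]
    have hI1 : (∫ x in ma..(0:ℝ), F x) = ∫ x in (0:ℝ)..Real.pi, fc x := by
      rw [intervalIntegral.integral_congr hFneg,
        intervalIntegral.integral_comp_neg (a := ma) (b := (0:ℝ)) fc]
      norm_num [ma]
    have hI2 : (∫ x in (0:ℝ)..Real.pi, F x) = ∫ x in (0:ℝ)..Real.pi, fc x :=
      intervalIntegral.integral_congr hFpos
    have hI3 : (∫ x in (0:ℝ)..Real.pi, fc x) = 0 := by
      rw [intervalIntegral.integral_congr hfceq, hmean]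
    rw [hI1, hI2, hI3, add_zero]
  case hderiv =>
    rw [hmaT]
    intro x hx
    rcases lt_trichotomy x 0 with hneg | hzero | hpos
    · have hx1 : -Real.pi < x := by rw [← hma]; exact hx.1
      have hmem : -x ∈ Icc 0 Real.pi := ⟨by linarith, by linarith⟩
      have hD : HasDerivAt f (g (-x)) (-x) :=
        (hd (-x) hmem).hasDerivAt (Icc_mem_nhds (by linarith) (by linarith))
      have h1 : HasDerivAt (fun y : ℝ => f (-y)) (g (-x) * (-1)) x :=
        hD.comp x (hasDerivAt_neg x)
      have hFeq : F =ᶠ[nhds x] fun y => f (-y) := by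
        filter_upwards [Ioo_mem_nhds hx.1 hneg] with y hy
        have hy1 : -Real.pi < y := by rw [← hma]; exact hy.1
        rw [hFdef]; simp only
        rw [_root_.abs_of_nonpos hy.2.le, hfcdef]; simp only
        rw [clamp_eq ⟨by linarith [hy.2], by linarith⟩]
      have h3 : HasDerivAt F (g (-x) * (-1)) x := h1.congr_of_eventuallyEq hFeq
      have hGx : G x = g (-x) * (-1) := by
        rw [hGdef]; simp only [if_neg (not_le.2 hneg)]
        rw [hgcdef]; simp only
        rw [clamp_eq hmem]; ring
      rw [hGx]
      exact h3.hasDerivWithinAt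
    · subst hzero
      have hFeqOn : EqOn F f (Icc 0 Real.pi) := fun y hy => by
        rw [hFdef]; simp only
        rw [_root_.abs_of_nonneg hy.1, hfcdef]; simp only; rw [clamp_eq hy]
      have hF0 : HasDerivWithinAt F (g 0) (Icc 0 Real.pi) 0 :=
        (hd 0 ⟨le_refl _, Real.pi_pos.le⟩).congr hFeqOn
          (hFeqOn ⟨le_refl _, Real.pi_pos.le⟩)
      have hG0 : G 0 = g 0 := by
        rw [hGdef]; simp only [if_pos (le_refl (0:ℝ))]
        rw [hgcdef]; simp only; rw [clamp_eq ⟨le_refl _, Real.pi_pos.le⟩]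
      rw [hG0]
      exact hF0.mono_of_mem_nhdsWithin Icc_mem_nhdsWithin_Ioi
    · have hmem : x ∈ Icc 0 Real.pi := ⟨hpos.le, hx.2.le⟩
      have hD : HasDerivAt f (g x) x :=
        (hd x hmem).hasDerivAt (Icc_mem_nhds hpos hx.2)
      have hFeq : F =ᶠ[nhds x] f := by
        filter_upwards [Ioo_mem_nhds hpos hx.2] with y hy
        rw [hFdef]; simp only
        rw [_root_.abs_of_nonneg hy.1.le, hfcdef]; simp only
        rw [clamp_eq ⟨hy.1.le, hy.2.le⟩]
      have h3 : HasDerivAt F (g x) x := hD.congr_of_eventuallyEq hFeq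
      have hGx : G x = g x := by
        rw [hGdef]; simp only [if_pos hpos.le]
        rw [hgcdef]; simp only
        rw [clamp_eq hmem]
      rw [hGx]
      exact h3.hasDerivWithinAt
  -- transfer back
  rw [hmaT] at main
  have hGcont2 : IntervalIntegrable (fun x => (G x) ^ 2) volume ma 0 := by
    refine intervalIntegrable_of_bdd (hGmeas.pow_const 2).aestronglyMeasurable
      (C := C ^ 2) (fun x => ?_) _ _
    have h1 := hGb x
    have h2 : |G x| ^ 2 ≤ C ^ 2 := by
      apply pow_le_pow_left₀ (abs_nonneg _) h1
    calc ‖(G x) ^ 2‖ = |G x| ^ 2 := by rw [Real.norm_eq_abs, _root_.abs_pow, _root_.sq_abs]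
    _ ≤ C ^ 2 := h2
  have hGcont3 : IntervalIntegrable (fun x => (G x) ^ 2) volume 0 Real.pi := by
    refine intervalIntegrable_of_bdd (hGmeas.pow_const 2).aestronglyMeasurable
      (C := C ^ 2) (fun x => ?_) _ _
    have h1 := hGb x
    have h2 : |G x| ^ 2 ≤ C ^ 2 := by
      apply pow_le_pow_left₀ (abs_nonneg _) h1
    calc ‖(G x) ^ 2‖ = |G x| ^ 2 := by rw [Real.norm_eq_abs, _root_.abs_pow, _root_.sq_abs]
    _ ≤ C ^ 2 := h2
  have hFsq := intervalIntegral.integral_add_adjacent_intervals (μ := volume)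
    ((hFcont.pow 2).intervalIntegrable ma 0) ((hFcont.pow 2).intervalIntegrable 0 Real.pi)
  have hGsq := intervalIntegral.integral_add_adjacent_intervals (μ := volume)
    hGcont2 hGcont3
  have hF1 : (∫ x in ma..(0:ℝ), (F x) ^ 2) = ∫ x in (0:ℝ)..Real.pi, (fc x) ^ 2 := by
    have : (∫ x in ma..(0:ℝ), (F x) ^ 2) = ∫ x in ma..(0:ℝ), (fun y => (fc y) ^ 2) (-x) := by
      refine intervalIntegral.integral_congr fun x hx => ?_
      rw [hFneg x hx]
    rw [this, intervalIntegral.integral_comp_neg (a := ma) (b := (0:ℝ)) (fun y => fc y ^ 2)]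
    norm_num [ma]
  have hF2 : (∫ x in (0:ℝ)..Real.pi, (F x) ^ 2) = ∫ x in (0:ℝ)..Real.pi, (fc x) ^ 2 :=
    intervalIntegral.integral_congr fun x hx => by rw [hFpos x hx]
  have hG1 : (∫ x in ma..(0:ℝ), (G x) ^ 2) = ∫ x in (0:ℝ)..Real.pi, (gc x) ^ 2 := by
    rw [intervalIntegral.integral_congr hGsqneg,
      intervalIntegral.integral_comp_neg (a := ma) (b := (0:ℝ)) (fun y => gc y ^ 2)]
    norm_num [ma]
  have hG2 : (∫ x in (0:ℝ)..Real.pi, (G x) ^ 2) = ∫ x in (0:ℝ)..Real.pi, (gc x) ^ 2 :=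
    intervalIntegral.integral_congr fun x hx => by rw [hGpos x hx]
  simp only [Pi.pow_apply] at hFsq
  rw [← hFsq, ← hGsq, hF1, hF2, hG1, hG2] at main
  have hfin1 : (∫ x in (0:ℝ)..Real.pi, (fc x) ^ 2) = ∫ x in (0:ℝ)..Real.pi, (f x) ^ 2 :=
    intervalIntegral.integral_congr fun x hx => by rw [hfceq x hx]
  have hfin2 : (∫ x in (0:ℝ)..Real.pi, (gc x) ^ 2) = ∫ x in (0:ℝ)..Real.pi, (g x) ^ 2 :=
    intervalIntegral.integral_congr fun x hx => by rw [hgceq x hx]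
  rw [hfin1, hfin2] at main
  linarith

end Stmt8



/-- Second-order Wirtinger inequality under mixed Dirichlet–Neumann boundary conditions
(the Euclidean version of inequality (E) in the proof of Lemma 8.1): if `v : [0,π] → ℝⁿ` is `C²`,
its last `n − k` components vanish at `0` and `π`, and the derivatives of its first `k` components
vanish at `0` and `π`, then `∫_0^π |v'|² ≤ ∫_0^π |v''|²`. -/
theorem stmt_8 (n k : ℕ) (hk : k ≤ n)
    (v : ℝ → EuclideanSpace ℝ (Fin n))
    (hv : ContDiffOn ℝ 2 v (Set.Icc 0 Real.pi))
    (hDir : ∀ j : Fin n, k ≤ (j : ℕ) → v 0 j = 0 ∧ v Real.pi j = 0)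
    (hNeu : ∀ j : Fin n, (j : ℕ) < k →
      derivWithin v (Set.Icc 0 Real.pi) 0 j = 0 ∧
      derivWithin v (Set.Icc 0 Real.pi) Real.pi j = 0) :
    (∫ θ in (0 : ℝ)..Real.pi, ‖derivWithin v (Set.Icc 0 Real.pi) θ‖ ^ 2) ≤
      ∫ θ in (0 : ℝ)..Real.pi,
        ‖derivWithin (derivWithin v (Set.Icc 0 Real.pi)) (Set.Icc 0 Real.pi) θ‖ ^ 2 := by
  classical
  set S : Set ℝ := Set.Icc 0 Real.pi with hS
  have hUD : UniqueDiffOn ℝ S := uniqueDiffOn_Icc Real.pi_pos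
  set w : ℝ → EuclideanSpace ℝ (Fin n) := derivWithin v S with hw
  set w' : ℝ → EuclideanSpace ℝ (Fin n) := derivWithin w S with hw'
  have hw1 : ContDiffOn ℝ 1 w S := hv.derivWithin hUD (by norm_num)
  have hwcont : ContinuousOn w S := hw1.continuousOn
  have hw'cont : ContinuousOn w' S := hw1.continuousOn_derivWithin hUD (le_refl 1)
  have hwd : ∀ x ∈ S, HasDerivWithinAt w (w' x) S x := fun x hx =>
    ((hw1.differentiableOn one_ne_zero) x hx).hasDerivWithinAt
  have hvd : ∀ x ∈ S, HasDerivWithinAt v (w x) S x := fun x hx =>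
    ((hv.differentiableOn (by norm_num)) x hx).hasDerivWithinAt
  have hvcont : ContinuousOn v S := hv.continuousOn
  have hpi0 : (0:ℝ) ∈ S := ⟨le_refl _, Real.pi_pos.le⟩
  have hpipi : Real.pi ∈ S := ⟨Real.pi_pos.le, le_refl _⟩
  -- componentwise inequality
  have hcomp : ∀ j : Fin n,
      (∫ x in (0:ℝ)..Real.pi, (w x j) ^ 2) ≤ ∫ x in (0:ℝ)..Real.pi, (w' x j) ^ 2 := by
    intro j
    have hgj : ContinuousOn (fun x => w' x j) S :=
      (EuclideanSpace.proj (𝕜 := ℝ) j).continuous.comp_continuousOn hw'cont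
    have hdj : ∀ x ∈ S, HasDerivWithinAt (fun x => w x j) (w' x j) S x := fun x hx =>
      (EuclideanSpace.proj (𝕜 := ℝ) j).hasFDerivAt.comp_hasDerivWithinAt x (hwd x hx)
    by_cases hjk : (j : ℕ) < k
    · exact Stmt8.wirtinger_dirichlet hgj hdj (hNeu j hjk).1 (hNeu j hjk).2
    · -- mean-zero case
      push_neg at hjk
      have hmean : (∫ x in (0:ℝ)..Real.pi, w x j) = 0 := by
        have hftc := intervalIntegral.integral_eq_sub_of_hasDeriv_right_of_le Real.pi_pos.le
          (f := fun x => v x j) (f' := fun x => w x j)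
          ((EuclideanSpace.proj (𝕜 := ℝ) j).continuous.comp_continuousOn hvcont)
          (fun x hx => by
            have h1 : HasDerivAt v (w x) x :=
              (hvd x (Set.Ioo_subset_Icc_self hx)).hasDerivAt
                (Icc_mem_nhds hx.1 hx.2)
            exact ((EuclideanSpace.proj (𝕜 := ℝ) j).hasFDerivAt.comp_hasDerivAt x
              h1).hasDerivWithinAt)
          (by
            apply ContinuousOn.intervalIntegrable
            rw [uIcc_of_le Real.pi_pos.le]
            exact (EuclideanSpace.proj (𝕜 := ℝ) j).continuous.comp_continuousOn hwcont)
        rw [hftc]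
        show v Real.pi j - v 0 j = 0
        rw [(hDir j hjk).1, (hDir j hjk).2, sub_zero]
      exact Stmt8.wirtinger_neumann hgj hdj hmean
  -- sum over components
  have hsum1 : (∫ θ in (0:ℝ)..Real.pi, ‖w θ‖ ^ 2)
      = ∑ j : Fin n, ∫ x in (0:ℝ)..Real.pi, (w x j) ^ 2 := by
    rw [← intervalIntegral.integral_finset_sum]
    · refine intervalIntegral.integral_congr fun x _ => ?_
      rw [PiLp.norm_sq_eq_of_L2]
      exact Finset.sum_congr rfl fun j _ => by rw [Real.norm_eq_abs, _root_.sq_abs]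
    · intro j _
      apply ContinuousOn.intervalIntegrable
      rw [uIcc_of_le Real.pi_pos.le]
      exact ((EuclideanSpace.proj (𝕜 := ℝ) j).continuous.comp_continuousOn hwcont).pow 2
  have hsum2 : (∫ θ in (0:ℝ)..Real.pi, ‖w' θ‖ ^ 2)
      = ∑ j : Fin n, ∫ x in (0:ℝ)..Real.pi, (w' x j) ^ 2 := by
    rw [← intervalIntegral.integral_finset_sum]
    · refine intervalIntegral.integral_congr fun x _ => ?_
      rw [PiLp.norm_sq_eq_of_L2]
      exact Finset.sum_congr rfl fun j _ => by rw [Real.norm_eq_abs, _root_.sq_abs]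
    · intro j _
      apply ContinuousOn.intervalIntegrable
      rw [uIcc_of_le Real.pi_pos.le]
      exact ((EuclideanSpace.proj (𝕜 := ℝ) j).continuous.comp_continuousOn hw'cont).pow 2
  rw [hsum1, hsum2]
  exact Finset.sum_le_sum fun j _ => hcomp j
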